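/- Along every solution of the envelope system with Ã + B̃ ≠ 0, the quantities P(T) = |q₁(T)|² + |q₂(T)|² and Δ(T) = |q₁(T)|² − |q₂(T)|² satisfy P′(T) = ((Ã − B̃)/(Ã + B̃)) · Δ′(T) for all T; equivalently, C = P(T) − ((Ã − B̃)/(Ã + B̃)) Δ(T) is a constant of motion. -/

import Mathlib

lemma hasDerivAt_norm_sq_comp (q : ℝ → ℂ) (hq : Differentiable ℝ q) (T : ℝ) :
    HasDerivAt (fun t => ‖q t‖ ^ 2)
      ((starRingEnd ℂ (deriv q T) * q T + starRingEnd ℂ (q T) * deriv q T).re) T := by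
  have h1 : HasDerivAt q (deriv q T) T := (hq T).hasDerivAt
  have hc : HasDerivAt (fun t => starRingEnd ℂ (q t)) (starRingEnd ℂ (deriv q T)) T := h1.star
  have hm := hc.mul h1
  have hr := Complex.reCLM.hasFDerivAt.comp_hasDerivAt T hm
  convert hr using 2 with t
  · rfl
  · rfl
  · simp [← Complex.normSq_eq_norm_sq, Complex.normSq_apply, Complex.mul_re]
  · rfl

/-- Along every solution of the envelope system with `Ã + B̃ ≠ 0`, the quantities
`P = |q₁|² + |q₂|²` and `Δ = |q₁|² − |q₂|²` satisfy `P′ = ((Ã−B̃)/(Ã+B̃)) Δ′`;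
equivalently `C = P − ((Ã−B̃)/(Ã+B̃)) Δ` is a constant of motion. -/
theorem envelope_P_Delta_relation
    (A B : ℝ) (hAB : A + B ≠ 0) (q₁ q₂ : ℝ → ℂ)
    (hq₁ : Differentiable ℝ q₁) (hq₂ : Differentiable ℝ q₂)
    (heq₁ : ∀ T : ℝ, Complex.I * deriv q₁ T =
      q₁ T + (A : ℂ) * (starRingEnd ℂ) (q₁ T) * q₂ T)
    (heq₂ : ∀ T : ℝ, Complex.I * deriv q₂ T = q₂ T + (B : ℂ) * (q₁ T) ^ 2) :
    let P : ℝ → ℝ := fun T => ‖q₁ T‖ ^ 2 + ‖q₂ T‖ ^ 2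
    let Δ : ℝ → ℝ := fun T => ‖q₁ T‖ ^ 2 - ‖q₂ T‖ ^ 2
    (∀ T : ℝ, deriv P T = ((A - B) / (A + B)) * deriv Δ T) ∧
      ∀ T S : ℝ, P T - ((A - B) / (A + B)) * Δ T = P S - ((A - B) / (A + B)) * Δ S := by
  intro P Δ
  -- explicit formulas for the derivatives of q₁, q₂
  have hd1 : ∀ T, deriv q₁ T = -Complex.I * (q₁ T + (A : ℂ) * (starRingEnd ℂ) (q₁ T) * q₂ T) := by
    intro T
    linear_combination (-Complex.I) * heq₁ T + deriv q₁ T * Complex.I_sq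
  have hd2 : ∀ T, deriv q₂ T = -Complex.I * (q₂ T + (B : ℂ) * (q₁ T) ^ 2) := by
    intro T
    linear_combination (-Complex.I) * heq₂ T + deriv q₂ T * Complex.I_sq
  have h1 := fun T => hasDerivAt_norm_sq_comp q₁ hq₁ T
  have h2 := fun T => hasDerivAt_norm_sq_comp q₂ hq₂ T
  have hP : ∀ T, HasDerivAt P
      ((starRingEnd ℂ (deriv q₁ T) * q₁ T + starRingEnd ℂ (q₁ T) * deriv q₁ T).re
        + (starRingEnd ℂ (deriv q₂ T) * q₂ T + starRingEnd ℂ (q₂ T) * deriv q₂ T).re) T :=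
    fun T => (h1 T).add (h2 T)
  have hΔ : ∀ T, HasDerivAt Δ
      ((starRingEnd ℂ (deriv q₁ T) * q₁ T + starRingEnd ℂ (q₁ T) * deriv q₁ T).re
        - (starRingEnd ℂ (deriv q₂ T) * q₂ T + starRingEnd ℂ (q₂ T) * deriv q₂ T).re) T :=
    fun T => (h1 T).sub (h2 T)
  have key : ∀ T : ℝ, deriv P T = ((A - B) / (A + B)) * deriv Δ T := by
    intro T
    rw [(hP T).deriv, (hΔ T).deriv, hd1 T, hd2 T]
    set a := q₁ T
    set b := q₂ T
    simp only [map_mul, map_add, map_neg, Complex.conj_I, map_pow, Complex.conj_ofReal]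
    field_simp
    simp [Complex.mul_re, Complex.mul_im, Complex.add_re, Complex.add_im,
      Complex.I_re, Complex.I_im, Complex.conj_re, Complex.conj_im, Complex.ofReal_re,
      Complex.ofReal_im, pow_two]
    ring
  refine ⟨key, ?_⟩
  have hdiff : Differentiable ℝ (fun T => P T - ((A - B) / (A + B)) * Δ T) := fun T =>
    ((hP T).sub (((hΔ T).const_mul _))).differentiableAt
  have hzero : ∀ T, deriv (fun T => P T - ((A - B) / (A + B)) * Δ T) T = 0 := by
    intro T
    rw [show (fun T => P T - ((A - B) / (A + B)) * Δ T) = P - fun y => ((A - B) / (A + B)) * Δ y from rfl,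
      ((hP T).sub ((hΔ T).const_mul _)).deriv]
    have := key T
    rw [(hP T).deriv, (hΔ T).deriv] at this
    rw [this]; ring
  intro T S
  exact is_const_of_deriv_eq_zero hdiff hzero T S
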